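/- Let V be an (st+s+t+1)-dimensional F_q-vector space with nondegenerate bilinear form, Σ of dimension st+t, χ ⊆ Σ of dimension st. Suppose P₁, P₂ are (s+1)-dimensional subspaces each trivially intersecting Σ, with P₁ ∩ P₂ = {0}, and let Q := span(P₁,P₂) ∩ Σ. Assume dim Q = s+1 and dim(χ ∩ Q) = s. Then dim(P₁^⊥ ∩ χ^⊥ ∩ P₂^⊥ ∩ χ^⊥) = dim(P₁^⊥ ∩ P₂^⊥ ∩ χ^⊥) = t - 1. -/
import Mathlib


open Module LinearMap

section Aux

variable {F V : Type*} [Field F] [AddCommGroup V] [Module F V] [FiniteDimensional F V]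

/-- The orthogonal complement is the comap of the dual annihilator under `B.flip`. -/
lemma orth_eq_comap (B : LinearMap.BilinForm F V) (W : Submodule F V) :
    B.orthogonal W = W.dualAnnihilator.comap (B.flip : V →ₗ[F] Module.Dual F V) := by
  ext x
  simp only [Submodule.mem_comap, Submodule.mem_dualAnnihilator,
    LinearMap.BilinForm.mem_orthogonal_iff, LinearMap.BilinForm.IsOrtho]
  rfl

lemma finrank_dualAnn (W : Submodule F V) :
    finrank F W.dualAnnihilator = finrank F V - finrank F W := by
  have h1 : finrank F (V ⧸ W) = finrank F W.dualAnnihilator :=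
    (Subspace.quotEquivAnnihilator W).finrank_eq
  have h2 := Submodule.finrank_quotient_add_finrank W
  omega

lemma finrank_orth (B : LinearMap.BilinForm F V) (hB : B.Nondegenerate) (W : Submodule F V) :
    finrank F (B.orthogonal W) = finrank F V - finrank F W := by
  have hflip : B.flip.Nondegenerate := hB.flip
  let e : V ≃ₗ[F] Module.Dual F V := B.flip.toDual hflip
  have he : (e : V →ₗ[F] Module.Dual F V) = (B.flip : V →ₗ[F] Module.Dual F V) := rfl
  have h3 : finrank F (W.dualAnnihilator.comap (e : V →ₗ[F] Module.Dual F V)) =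
      finrank F W.dualAnnihilator :=
    LinearEquiv.finrank_eq (LinearEquiv.ofSubmodule' e W.dualAnnihilator)
  rw [orth_eq_comap, ← he, h3]
  exact finrank_dualAnn W

lemma orth_sup (B : LinearMap.BilinForm F V) (W₁ W₂ : Submodule F V) :
    B.orthogonal (W₁ ⊔ W₂) = B.orthogonal W₁ ⊓ B.orthogonal W₂ := by
  rw [orth_eq_comap, orth_eq_comap, orth_eq_comap, Submodule.dualAnnihilator_sup_eq,
    Submodule.comap_inf]

end Aux

/-- Core computation of Claim 2: images of two affine points on a common line of
Y(s,t,q) intersect in dimension t-1. -/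
theorem stmt_17 {q s t : ℕ} {F V : Type*} [Field F] [Fintype F] (hq : Fintype.card F = q)
    [AddCommGroup V] [Module F V] [FiniteDimensional F V]
    (hV : finrank F V = s * t + s + t + 1)
    (B : LinearMap.BilinForm F V) (hB : B.Nondegenerate)
    (Sig χ : Submodule F V) (hsub : χ ≤ Sig)
    (hSig : finrank F Sig = s * t + t) (hχ : finrank F χ = s * t)
    (P₁ P₂ Q : Submodule F V)
    (h₁ : finrank F P₁ = s + 1) (h₂ : finrank F P₂ = s + 1)
    (hd₁ : P₁ ⊓ Sig = ⊥) (hd₂ : P₂ ⊓ Sig = ⊥) (h₁₂ : P₁ ⊓ P₂ = ⊥)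
    (hQ : Q = (P₁ ⊔ P₂) ⊓ Sig)
    (hQdim : finrank F Q = s + 1)
    (hχQ : finrank F (χ ⊓ Q : Submodule F V) = s) :
    finrank F ((B.orthogonal P₁ ⊓ B.orthogonal χ) ⊓ (B.orthogonal P₂ ⊓ B.orthogonal χ) :
        Submodule F V) = t - 1 ∧
    finrank F (B.orthogonal P₁ ⊓ B.orthogonal P₂ ⊓ B.orthogonal χ : Submodule F V)
      = t - 1 := by
  -- dimension of P₁ ⊔ P₂
  have hsup12 : finrank F (P₁ ⊔ P₂ : Submodule F V) = 2 * s + 2 := by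
    have := Submodule.finrank_sup_add_finrank_inf_eq P₁ P₂
    rw [h₁₂] at this
    simp [finrank_bot] at this
    omega
  -- (P₁ ⊔ P₂) ⊓ χ = χ ⊓ Q
  have hinfχ : (P₁ ⊔ P₂) ⊓ χ = χ ⊓ Q := by
    rw [hQ]
    rw [inf_comm χ _, inf_assoc]
    congr 1
    exact (inf_eq_right.mpr hsub).symm
  -- dimension of P₁ ⊔ P₂ ⊔ χ
  have hbig : finrank F (P₁ ⊔ P₂ ⊔ χ : Submodule F V) = s * t + s + 2 := by
    have := Submodule.finrank_sup_add_finrank_inf_eq (P₁ ⊔ P₂) χ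
    rw [hinfχ, hχQ, hsup12, hχ] at this
    omega
  -- hence t ≥ 1
  have ht : 1 ≤ t := by
    have hle := Submodule.finrank_le (P₁ ⊔ P₂ ⊔ χ : Submodule F V)
    rw [hbig, hV] at hle
    omega
  -- the orthogonal of the big sup
  have horth : finrank F (B.orthogonal (P₁ ⊔ P₂ ⊔ χ)) = t - 1 := by
    rw [finrank_orth B hB, hbig, hV]
    omega
  have hkey : B.orthogonal (P₁ ⊔ P₂ ⊔ χ) =
      B.orthogonal P₁ ⊓ B.orthogonal P₂ ⊓ B.orthogonal χ := by
    rw [orth_sup, orth_sup]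
  have h2 : finrank F (B.orthogonal P₁ ⊓ B.orthogonal P₂ ⊓ B.orthogonal χ : Submodule F V)
      = t - 1 := by rw [← hkey]; exact horth
  refine ⟨?_, h2⟩
  have heq : (B.orthogonal P₁ ⊓ B.orthogonal χ) ⊓ (B.orthogonal P₂ ⊓ B.orthogonal χ)
      = B.orthogonal P₁ ⊓ B.orthogonal P₂ ⊓ B.orthogonal χ := by
    ext x
    simp only [Submodule.mem_inf]
    tauto
  rw [heq]
  exact h2
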